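/- Let A, B be bounded operators on a Hilbert space X with closed ranges. Then the range of A B* is closed if and only if ker(A) + rng(B*) is a closed subspace of X. -/

import Mathlib

open ContinuousLinearMap

/-- For a bounded operator `A` with closed range on a Hilbert space and any submodule `M`,
the image `A(M)` is closed iff `ker A + M` is closed. -/
lemma image_isClosed_iff_sup_ker {X : Type*} [NormedAddCommGroup X] [InnerProductSpace ℂ X]
    [CompleteSpace X] (A : X →L[ℂ] X)
    (hA : IsClosed ((LinearMap.range (A : X →ₗ[ℂ] X) : Submodule ℂ X) : Set X))
    (M : Submodule ℂ X) :
    IsClosed ((M.map (A : X →ₗ[ℂ] X) : Submodule ℂ X) : Set X)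
      ↔ IsClosed ((LinearMap.ker (A : X →ₗ[ℂ] X) ⊔ M : Submodule ℂ X) : Set X) := by
  set N : Submodule ℂ X := LinearMap.ker (A : X →ₗ[ℂ] X) with hN
  have hNc : IsClosed (N : Set X) := isClosed_ker A
  haveI : CompleteSpace N := hNc.completeSpace_coe
  constructor
  · -- easy direction: `ker A ⊔ M = A ⁻¹' (A '' M)`
    intro h
    have hset : ((N ⊔ M : Submodule ℂ X) : Set X)
        = A ⁻¹' ((M.map (A : X →ₗ[ℂ] X) : Submodule ℂ X) : Set X) := by
      ext x
      simp only [SetLike.mem_coe, Set.mem_preimage, Submodule.mem_map]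
      constructor
      · intro hx
        obtain ⟨n, hn, m, hm, rfl⟩ := Submodule.mem_sup.1 hx
        exact ⟨m, hm, by
          have : A n = 0 := LinearMap.mem_ker.1 hn
          simp [this]⟩
      · rintro ⟨m, hm, hme⟩
        have : x - m ∈ N := by
          simp only [hN, LinearMap.mem_ker, map_sub]
          rw [show (A : X →ₗ[ℂ] X) m = A m from rfl] at hme
          change A x - A m = 0
          rw [hme]; abel
        have : x = (x - m) + m := by abel
        rw [this]
        exact Submodule.add_mem_sup ‹x - m ∈ N› hm
    rw [hset]
    exact h.preimage A.continuous
  · -- hard direction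
    intro hS
    set S : Submodule ℂ X := N ⊔ M with hSdef
    -- restriction of `A` to `Nᗮ`
    set f : ↥Nᗮ →L[ℂ] X := A.comp (Submodule.subtypeL Nᗮ) with hf
    haveI : CompleteSpace ↥(LinearMap.range (A : X →ₗ[ℂ] X)) := hA.completeSpace_coe
    have hmem : ∀ x : ↥Nᗮ, f x ∈ LinearMap.range (A : X →ₗ[ℂ] X) := fun x => ⟨(x : X), rfl⟩
    set g : ↥Nᗮ →L[ℂ] ↥(LinearMap.range (A : X →ₗ[ℂ] X)) :=
      f.codRestrict (LinearMap.range (A : X →ₗ[ℂ] X)) hmem with hg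
    have hker : LinearMap.ker (g : ↥Nᗮ →ₗ[ℂ] ↥(LinearMap.range (A : X →ₗ[ℂ] X))) = ⊥ := by
      rw [LinearMap.ker_eq_bot']
      intro x hx
      have hx0 : A (x : X) = 0 := by
        have := congrArg (Subtype.val) hx
        simpa [hg, hf] using this
      have hxN : (x : X) ∈ N := LinearMap.mem_ker.2 hx0
      have : (x : X) ∈ N ⊓ Nᗮ := ⟨hxN, x.2⟩
      rw [N.orthogonal_disjoint.eq_bot] at this
      exact Subtype.ext (by simpa using this)
    have hsurj : LinearMap.range (g : ↥Nᗮ →ₗ[ℂ] ↥(LinearMap.range (A : X →ₗ[ℂ] X))) = ⊤ := by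
      rw [LinearMap.range_eq_top]
      rintro ⟨y, x, rfl⟩
      obtain ⟨n, hn, p, hp, hx⟩ := N.exists_add_mem_mem_orthogonal x
      refine ⟨⟨p, hp⟩, ?_⟩
      apply Subtype.ext
      show A p = A x
      rw [hx, map_add, (show A n = 0 from LinearMap.mem_ker.1 hn), zero_add]
    set e := ContinuousLinearEquiv.ofBijective g hker hsurj with he
    -- `f` is bounded below, hence a uniform embedding
    have hbound : ∀ x : ↥Nᗮ, ‖x‖ ≤ ‖(e.symm : ↥(LinearMap.range (A : X →ₗ[ℂ] X)) →L[ℂ] ↥Nᗮ)‖₊ * ‖f x‖ := by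
      intro x
      have h1 : x = e.symm (e x) := (e.symm_apply_apply x).symm
      have h2 : ‖e.symm (e x)‖ ≤ ‖(e.symm : ↥(LinearMap.range (A : X →ₗ[ℂ] X)) →L[ℂ] ↥Nᗮ)‖ * ‖e x‖ :=
        (e.symm : ↥(LinearMap.range (A : X →ₗ[ℂ] X)) →L[ℂ] ↥Nᗮ).le_opNorm (e x)
      have h3 : ‖e x‖ = ‖f x‖ := rfl
      calc ‖x‖ = ‖e.symm (e x)‖ := by rw [← h1]
        _ ≤ ‖(e.symm : ↥(LinearMap.range (A : X →ₗ[ℂ] X)) →L[ℂ] ↥Nᗮ)‖ * ‖e x‖ := h2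
        _ = ‖(e.symm : ↥(LinearMap.range (A : X →ₗ[ℂ] X)) →L[ℂ] ↥Nᗮ)‖₊ * ‖f x‖ := by
            rw [h3]; norm_cast
    have hUE : IsUniformEmbedding f := f.isUniformEmbedding_of_bound hbound
    -- the closed set upstairs
    set C : Set ↥Nᗮ := Subtype.val ⁻¹' (S : Set X) with hC
    have hCc : IsClosed C := hS.preimage continuous_subtype_val
    have hCcomp : IsComplete C := hCc.isComplete
    have hcomp : IsComplete (f '' C) := (isComplete_image_iff hUE.isUniformInducing).2 hCcomp
    have himg : ((M.map (A : X →ₗ[ℂ] X) : Submodule ℂ X) : Set X) = f '' C := by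
      ext y
      simp only [SetLike.mem_coe, Submodule.mem_map, Set.mem_image]
      constructor
      · rintro ⟨m, hm, rfl⟩
        obtain ⟨n, hn, p, hp, hx⟩ := N.exists_add_mem_mem_orthogonal m
        refine ⟨⟨p, hp⟩, ?_, ?_⟩
        · show p ∈ S
          have : p = m - n := by rw [hx]; abel
          rw [this]
          exact Submodule.sub_mem _ (Submodule.mem_sup_right hm) (Submodule.mem_sup_left hn)
        · show A p = (A : X →ₗ[ℂ] X) m
          show A p = A m
          rw [hx, map_add, (show A n = 0 from LinearMap.mem_ker.1 hn), zero_add]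
      · rintro ⟨⟨p, hp⟩, hpS, rfl⟩
        have hpS' : p ∈ S := hpS
        obtain ⟨n, hn, m, hm, rfl⟩ := Submodule.mem_sup.1 hpS'
        refine ⟨m, hm, ?_⟩
        show (A : X →ₗ[ℂ] X) m = A (n + m)
        show A m = A (n + m)
        rw [map_add, (show A n = 0 from LinearMap.mem_ker.1 hn), zero_add]
    rw [himg]
    exact hcomp.isClosed

/-- for bounded operators `A, B` with closed ranges on a Hilbert space,
`rng (A B*)` is closed iff `ker A + rng B*` is closed. -/
theorem stmt_16 {X : Type*} [NormedAddCommGroup X] [InnerProductSpace ℂ X] [CompleteSpace X]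
    (A B : X →L[ℂ] X)
    (hA : IsClosed ((LinearMap.range (A : X →ₗ[ℂ] X) : Submodule ℂ X) : Set X))
    (hB : IsClosed ((LinearMap.range (B : X →ₗ[ℂ] X) : Submodule ℂ X) : Set X)) :
    IsClosed ((LinearMap.range ((A.comp (ContinuousLinearMap.adjoint B) : X →L[ℂ] X) : X →ₗ[ℂ] X) : Submodule ℂ X) : Set X)
      ↔ IsClosed ((LinearMap.ker (A : X →ₗ[ℂ] X) ⊔ LinearMap.range (ContinuousLinearMap.adjoint B : X →ₗ[ℂ] X) :
          Submodule ℂ X) : Set X) := by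
  have h : LinearMap.range ((A.comp (ContinuousLinearMap.adjoint B) : X →L[ℂ] X) : X →ₗ[ℂ] X)
      = (LinearMap.range (ContinuousLinearMap.adjoint B : X →ₗ[ℂ] X)).map (A : X →ₗ[ℂ] X) := by
    ext x
    simp only [LinearMap.mem_range, Submodule.mem_map, ContinuousLinearMap.coe_comp',
      Function.comp_apply, ContinuousLinearMap.coe_coe]
    constructor
    · rintro ⟨y, rfl⟩; exact ⟨ContinuousLinearMap.adjoint B y, ⟨y, rfl⟩, rfl⟩
    · rintro ⟨m, ⟨y, rfl⟩, rfl⟩; exact ⟨y, rfl⟩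
  rw [h]
  exact image_isClosed_iff_sup_ker A hA _
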